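/- arXiv:1905.06427 — 10 statements merged into one kernel-verified Lean document; each statement's English description precedes it below -/
import Mathlib

section
/- Let m11, m12, m21, u2 be real numbers with m12 ≠ 0 and m11² + m12·m21 < 0, and set ρ = √(−(m11² + m12·m21)) and e = −m12·u2/ρ. Define the affine vector field F(x,y) = (m11·x + m12·y, m21·x − m11·y + u2), the vector field G(x,y) = (−y, x + e), and the linear map φ(x,y) = (ρ·x, −m11·x − m12·y). Then ρ > 0, φ is an invertible linear map of ℝ² that maps the line {(x,y) : x = 0} onto itself and the half-plane {(x,y) : x ≤ 0} onto itself, and for every (x,y) ∈ ℝ² one has φ(F(x,y)) = ρ·G(φ(x,y)); that is, φ conjugates the system (ẋ,ẏ) = F(x,y) to the canonical system (ẋ,ẏ) = G(x,y) up to the constant time rescaling t ↦ ρ·t. -/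
open Real

theorem canonical_form_left_zone
    (m11 m12 m21 u2 : ℝ) (hm12 : m12 ≠ 0) (hcen : m11 ^ 2 + m12 * m21 < 0)
    (ρ : ℝ) (hρ : ρ = Real.sqrt (-(m11 ^ 2 + m12 * m21)))
    (e : ℝ) (he : e = -m12 * u2 / ρ)
    (F : ℝ × ℝ → ℝ × ℝ)
    (hF : F = fun p => (m11 * p.1 + m12 * p.2, m21 * p.1 - m11 * p.2 + u2))
    (G : ℝ × ℝ → ℝ × ℝ)
    (hG : G = fun p => (-p.2, p.1 + e))
    (φ : ℝ × ℝ →ₗ[ℝ] ℝ × ℝ)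
    (hφ : ∀ p : ℝ × ℝ, φ p = (ρ * p.1, -m11 * p.1 - m12 * p.2)) :
    0 < ρ ∧ Function.Bijective φ ∧
    φ '' {p : ℝ × ℝ | p.1 = 0} = {p : ℝ × ℝ | p.1 = 0} ∧
    φ '' {p : ℝ × ℝ | p.1 ≤ 0} = {p : ℝ × ℝ | p.1 ≤ 0} ∧
    ∀ p : ℝ × ℝ, φ (F p) = ρ • G (φ p) := by
  have hρpos : 0 < ρ := by
    rw [hρ]; exact Real.sqrt_pos.mpr (by linarith)
  have hρne : ρ ≠ 0 := ne_of_gt hρpos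
  have hρsq : ρ ^ 2 = -(m11 ^ 2 + m12 * m21) := by
    rw [hρ, sq_sqrt (by linarith)]
  refine ⟨hρpos, ?_, ?_, ?_, ?_⟩
  · constructor
    · intro p q h
      rw [hφ, hφ, Prod.mk.injEq] at h
      obtain ⟨h1, h2⟩ := h
      have e1 : p.1 = q.1 := by
        field_simp at h1; exact h1
      have e2 : p.2 = q.2 := by
        rw [e1] at h2
        have : m12 * p.2 = m12 * q.2 := by linarith
        exact mul_left_cancel₀ hm12 this
      exact Prod.ext e1 e2
    · intro q
      refine ⟨(q.1 / ρ, (-m11 * (q.1 / ρ) - q.2) / m12), ?_⟩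
      rw [hφ]
      have : ρ * (q.1 / ρ) = q.1 := by field_simp
      refine Prod.ext this ?_
      field_simp
      ring
  · ext q
    simp only [Set.mem_image, Set.mem_setOf_eq]
    constructor
    · rintro ⟨p, hp, rfl⟩
      rw [hφ]; simp [hp]
    · intro hq
      refine ⟨(0, -q.2 / m12), rfl, ?_⟩
      rw [hφ]
      have : -q.1 = 0 := by rw [hq]; ring
      refine Prod.ext (by simp [hq]) ?_
      field_simp
      ring
  · ext q
    simp only [Set.mem_image, Set.mem_setOf_eq]
    constructor
    · rintro ⟨p, hp, rfl⟩
      rw [hφ]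
      exact mul_nonpos_of_nonneg_of_nonpos (le_of_lt hρpos) hp
    · intro hq
      refine ⟨(q.1 / ρ, (-m11 * (q.1 / ρ) - q.2) / m12), ?_, ?_⟩
      · exact div_nonpos_of_nonpos_of_nonneg hq (le_of_lt hρpos)
      · rw [hφ]
        refine Prod.ext (by field_simp) ?_
        field_simp
        ring
  · intro p
    rw [hφ, hF, hG, hφ]
    simp only [Prod.smul_mk, smul_eq_mul]
    refine Prod.ext (by ring) ?_
    simp only
    rw [he]
    field_simp
    linear_combination (-(2:ℝ) * p.1 + p.1) * hρsq
end

section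
/- Let m11⁻, m12⁻, m21⁻ be real numbers with m12⁻ ≠ 0 and (m11⁻)² + m12⁻·m21⁻ < 0, and set ρ = √(−((m11⁻)² + m12⁻·m21⁻)). Let m11⁺, m12⁺, m21⁺, u2⁺ be real numbers, and define a = (1/ρ)(m11⁺ − m11⁻·m12⁺/m12⁻), b = −m12⁺/m12⁻, c = (1/ρ²)((m11⁻)²·m12⁺/m12⁻ − 2·m11⁻·m11⁺ − m12⁻·m21⁺), d = −m12⁻·u2⁺/ρ. Define F⁺(x,y) = (m11⁺·x + m12⁺·y, m21⁺·x − m11⁺·y + u2⁺), G⁺(x,y) = (a·x + b·y, c·x − a·y + d), and the linear map φ(x,y) = (ρ·x, −m11⁻·x − m12⁻·y). Then for every (x,y) ∈ ℝ² one has φ(F⁺(x,y)) = ρ·G⁺(φ(x,y)), and moreover a² + b·c = ((m11⁺)² + m12⁺·m21⁺)/ρ²; in particular a² + b·c < 0 if and only if (m11⁺)² + m12⁺·m21⁺ < 0. -/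
open Real

theorem canonical_form_right_zone
    (m11m m12m m21m : ℝ) (hm12m : m12m ≠ 0) (hcen : m11m ^ 2 + m12m * m21m < 0)
    (ρ : ℝ) (hρ : ρ = Real.sqrt (-(m11m ^ 2 + m12m * m21m)))
    (m11p m12p m21p u2p : ℝ)
    (a b c d : ℝ)
    (ha : a = (1 / ρ) * (m11p - m11m * m12p / m12m))
    (hb : b = -m12p / m12m)
    (hc : c = (1 / ρ ^ 2) * (m11m ^ 2 * m12p / m12m - 2 * m11m * m11p - m12m * m21p))
    (hd : d = -m12m * u2p / ρ)
    (F : ℝ × ℝ → ℝ × ℝ)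
    (hF : F = fun p => (m11p * p.1 + m12p * p.2, m21p * p.1 - m11p * p.2 + u2p))
    (G : ℝ × ℝ → ℝ × ℝ)
    (hG : G = fun p => (a * p.1 + b * p.2, c * p.1 - a * p.2 + d))
    (φ : ℝ × ℝ →ₗ[ℝ] ℝ × ℝ)
    (hφ : ∀ p : ℝ × ℝ, φ p = (ρ * p.1, -m11m * p.1 - m12m * p.2)) :
    (∀ p : ℝ × ℝ, φ (F p) = ρ • G (φ p)) ∧
    a ^ 2 + b * c = (m11p ^ 2 + m12p * m21p) / ρ ^ 2 ∧
    (a ^ 2 + b * c < 0 ↔ m11p ^ 2 + m12p * m21p < 0) := by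
  have hρpos : 0 < ρ := by
    rw [hρ]; exact Real.sqrt_pos.2 (by linarith)
  have hρne : ρ ≠ 0 := ne_of_gt hρpos
  have hsq : 0 < ρ ^ 2 := by positivity
  have hval : a ^ 2 + b * c = (m11p ^ 2 + m12p * m21p) / ρ ^ 2 := by
    subst ha hb hc; field_simp; ring
  refine ⟨?_, hval, ?_⟩
  · intro p
    subst hF hG ha hb hc hd
    rw [hφ, hφ]
    simp only [Prod.smul_mk, smul_eq_mul, Prod.mk.injEq]
    constructor <;> field_simp <;> ring
  · rw [hval, div_neg_iff]
    constructor
    · rintro (⟨h, _⟩ | ⟨_, h⟩) <;> linarith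
    · intro h; exact Or.inr ⟨h, hsq⟩
end

section
/- Let e > 0 and y0 > 0, and let x, y : ℝ → ℝ be differentiable functions satisfying x'(t) = −y(t) and y'(t) = x(t) + e for all t, with x(0) = 0 and y(0) = y0. Set t_l0 = 2π − arccos(2e²/(e² + y0²) − 1). Then π < t_l0 < 2π, x(t_l0) = 0, y(t_l0) = −y0, and x(t) < 0 for every t with 0 < t < t_l0; that is, t_l0 is the first return time of the orbit through (0, y0) to the switching line x = 0, and the return point is (0, −y0). -/
open Real

theorem left_half_return_time
    (e y0 : ℝ) (he : 0 < e) (hy0 : 0 < y0)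
    (x y : ℝ → ℝ)
    (hx : ∀ t : ℝ, HasDerivAt x (-(y t)) t)
    (hy : ∀ t : ℝ, HasDerivAt y (x t + e) t)
    (hx0 : x 0 = 0) (hy0' : y 0 = y0)
    (tl0 : ℝ)
    (htl0 : tl0 = 2 * π - Real.arccos (2 * e ^ 2 / (e ^ 2 + y0 ^ 2) - 1)) :
    π < tl0 ∧ tl0 < 2 * π ∧ x tl0 = 0 ∧ y tl0 = -y0 ∧
    ∀ t : ℝ, 0 < t → t < tl0 → x t < 0 := by
  set R : ℝ := Real.sqrt (e ^ 2 + y0 ^ 2) with hRdef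
  have hsum : (0:ℝ) < e ^ 2 + y0 ^ 2 := by positivity
  have hR2 : R ^ 2 = e ^ 2 + y0 ^ 2 := Real.sq_sqrt hsum.le
  have hRpos : 0 < R := Real.sqrt_pos.mpr hsum
  have heR : e < R := by
    nlinarith [sq_nonneg (R - e)]
  have hdiv1 : e / R < 1 := (div_lt_one hRpos).mpr heR
  have hdiv0 : 0 < e / R := div_pos he hRpos
  set φ : ℝ := Real.arccos (e / R) with hφdef
  have hcosφ : Real.cos φ = e / R := Real.cos_arccos (by linarith) hdiv1.le
  have hsinφ : Real.sin φ = y0 / R := by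
    rw [hφdef, Real.sin_arccos]
    have : 1 - (e / R) ^ 2 = (y0 / R) ^ 2 := by
      field_simp
      nlinarith
    rw [this, Real.sqrt_sq (by positivity)]
  have hφpos : 0 < φ := Real.arccos_pos.mpr hdiv1
  have hφlt : φ < π / 2 := Real.arccos_lt_pi_div_two.mpr hdiv0
  -- tl0 = 2π - 2φ
  have htl0' : tl0 = 2 * π - 2 * φ := by
    have harg : 2 * e ^ 2 / (e ^ 2 + y0 ^ 2) - 1 = Real.cos (2 * φ) := by
      rw [Real.cos_two_mul, hcosφ]
      field_simp
      nlinarith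
    rw [htl0, harg, Real.arccos_cos (by linarith) (by linarith)]
  -- explicit solution
  set X : ℝ → ℝ := fun t => R * Real.cos (t + φ) - e with hXdef
  set Y : ℝ → ℝ := fun t => R * Real.sin (t + φ) with hYdef
  have hXd : ∀ t, HasDerivAt X (-(Y t)) t := by
    intro t
    have h1 : HasDerivAt (fun t : ℝ => t + φ) 1 t :=
      (hasDerivAt_id t).add_const φ
    have h2 : HasDerivAt (fun t : ℝ => Real.cos (t + φ)) (-Real.sin (t + φ) * 1) t :=
      h1.cos
    have h3 := (h2.const_mul R).sub_const e
    refine h3.congr_deriv ?_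
    simp [hYdef]
  have hYd : ∀ t, HasDerivAt Y (X t + e) t := by
    intro t
    have h1 : HasDerivAt (fun t : ℝ => t + φ) 1 t :=
      (hasDerivAt_id t).add_const φ
    have h2 : HasDerivAt (fun t : ℝ => Real.sin (t + φ)) (Real.cos (t + φ) * 1) t :=
      h1.sin
    have h3 := h2.const_mul R
    refine h3.congr_deriv ?_
    simp [hXdef]
  -- uniqueness
  set h : ℝ → ℝ := fun t => (x t - X t) ^ 2 + (y t - Y t) ^ 2 with hhdef
  have hhd : ∀ t, HasDerivAt h 0 t := by
    intro t
    have h1 : HasDerivAt (fun t => x t - X t) (-(y t) - -(Y t)) t := (hx t).sub (hXd t)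
    have h2 : HasDerivAt (fun t => y t - Y t) ((x t + e) - (X t + e)) t := (hy t).sub (hYd t)
    have h3 := (h1.pow 2).add (h2.pow 2)
    refine h3.congr_deriv ?_
    ring
  have hconst : ∀ t, h t = h 0 := by
    intro t
    have := is_const_of_deriv_eq_zero (f := h)
      (fun t => (hhd t).differentiableAt) (fun t => (hhd t).deriv) t 0
    exact this
  have hh0 : h 0 = 0 := by
    simp only [hhdef, hx0, hy0', hXdef, hYdef]
    have hc : R * Real.cos (0 + φ) = e := by
      rw [zero_add, hcosφ]; field_simp
    have hs : R * Real.sin (0 + φ) = y0 := by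
      rw [zero_add, hsinφ]; field_simp
    rw [hc, hs]; ring
  have hboth : ∀ t, x t = X t ∧ y t = Y t := by
    intro t
    have h1 := hconst t
    rw [hh0] at h1
    simp only [hhdef] at h1
    have ha := sq_nonneg (x t - X t)
    have hb := sq_nonneg (y t - Y t)
    have ha0 : (x t - X t) ^ 2 = 0 := by linarith
    have hb0 : (y t - Y t) ^ 2 = 0 := by linarith
    constructor
    · have := pow_eq_zero_iff (n := 2) (by norm_num) |>.mp ha0
      linarith
    · have := pow_eq_zero_iff (n := 2) (by norm_num) |>.mp hb0
      linarith
  have hxX : ∀ t, x t = X t := fun t => (hboth t).1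
  have hyY : ∀ t, y t = Y t := fun t => (hboth t).2
  have hpi : π < tl0 := by rw [htl0']; linarith [Real.pi_pos]
  have h2pi : tl0 < 2 * π := by rw [htl0']; linarith
  refine ⟨hpi, h2pi, ?_, ?_, ?_⟩
  · rw [hxX, hXdef]
    have : tl0 + φ = 2 * π - φ := by rw [htl0']; ring
    simp only [this]
    rw [Real.cos_sub, Real.cos_two_pi, Real.sin_two_pi, hcosφ]
    field_simp
    ring
  · rw [hyY, hYdef]
    have : tl0 + φ = 2 * π - φ := by rw [htl0']; ring
    simp only [this]
    rw [Real.sin_sub, Real.cos_two_pi, Real.sin_two_pi, hsinφ]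
    field_simp
    ring
  · intro t ht0 httl
    rw [hxX, hXdef]
    simp only
    have hRe : e = R * Real.cos φ := by rw [hcosφ]; field_simp
    have key : Real.cos (t + φ) < Real.cos φ := by
      rcases le_or_gt (t + φ) π with hle | hgt
      · exact Real.cos_lt_cos_of_nonneg_of_le_pi hφpos.le hle (by linarith)
      · have heq : Real.cos (t + φ) = Real.cos (2 * π - (t + φ)) := by
          rw [Real.cos_sub, Real.cos_two_pi, Real.sin_two_pi]; ring
        rw [heq]
        have h1 : φ < 2 * π - (t + φ) := by
          rw [htl0'] at httl; linarith
        exact Real.cos_lt_cos_of_nonneg_of_le_pi hφpos.le (by linarith) h1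
    nlinarith
end

section
/- Let β ∈ ℝ and define f0(s) = s, f1(s) = 1 + β²·s², f2(s) = (s² + 1)·arccos(2/(s² + 1) − 1). Then for every s > 0 the third-order Wronskian determinant W(f0, f1, f2)(s) = det [[f0(s), f1(s), f2(s)], [f0'(s), f1'(s), f2'(s)], [f0''(s), f1''(s), f2''(s)]] equals 2(β² − 1)·arccos(2/(s² + 1) − 1) − 4(β² + 1)·s/(s² + 1). -/
open Real

lemma arccos_eq_two_arctan {s : ℝ} (hs : 0 ≤ s) :
    Real.arccos (2 / (s ^ 2 + 1) - 1) = 2 * Real.arctan s := by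
  have h1 : (0:ℝ) < s ^ 2 + 1 := by positivity
  have hc : Real.cos (2 * Real.arctan s) = 2 / (s ^ 2 + 1) - 1 := by
    rw [Real.cos_two_mul, Real.cos_arctan]
    have h2 : (0:ℝ) < 1 + s ^ 2 := by positivity
    rw [div_pow, one_pow, Real.sq_sqrt h2.le]
    field_simp
    ring
  rw [← hc, Real.arccos_cos]
  · have : Real.arctan 0 ≤ Real.arctan s := Real.arctan_strictMono.monotone hs
    rw [Real.arctan_zero] at this
    linarith
  · have := Real.arctan_lt_pi_div_two s
    have := Real.pi_pos
    linarith

lemma deriv_g :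
    deriv (fun s : ℝ => (s ^ 2 + 1) * (2 * Real.arctan s)) =
      fun s => 4 * s * Real.arctan s + 2 := by
  funext s
  have h1 : (0:ℝ) < 1 + s ^ 2 := by positivity
  have h : HasDerivAt (fun s : ℝ => (s ^ 2 + 1) * (2 * Real.arctan s))
      (4 * s * Real.arctan s + 2) s := by
    have ha : HasDerivAt (fun s : ℝ => s ^ 2 + 1) (2 * s) s := by
      simpa using ((hasDerivAt_pow 2 s).add_const 1)
    have hb : HasDerivAt (fun s : ℝ => 2 * Real.arctan s) (2 * (1 / (1 + s ^ 2))) s :=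
      (Real.hasDerivAt_arctan s).const_mul 2
    have : HasDerivAt (fun s : ℝ => (s ^ 2 + 1) * (2 * Real.arctan s)) _ s := ha.mul hb
    convert this using 1
    field_simp
    ring
  exact h.deriv

lemma deriv_g2 (s : ℝ) :
    deriv (deriv (fun s : ℝ => (s ^ 2 + 1) * (2 * Real.arctan s))) s =
      4 * Real.arctan s + 4 * s / (1 + s ^ 2) := by
  rw [deriv_g]
  have h1 : (0:ℝ) < 1 + s ^ 2 := by positivity
  have h : HasDerivAt (fun s : ℝ => 4 * s * Real.arctan s + 2)
      (4 * Real.arctan s + 4 * s / (1 + s ^ 2)) s := by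
    have ha : HasDerivAt (fun s : ℝ => 4 * s) 4 s := by
      simpa using (hasDerivAt_id s).const_mul (4:ℝ)
    have : HasDerivAt (fun s : ℝ => 4 * s * Real.arctan s + 2) _ s :=
      (ha.mul (Real.hasDerivAt_arctan s)).add_const 2
    convert this using 1
    field_simp
  exact h.deriv

theorem third_wronskian_formula
    (β : ℝ)
    (f0 f1 f2 : ℝ → ℝ)
    (hf0 : f0 = fun s => s)
    (hf1 : f1 = fun s => 1 + β ^ 2 * s ^ 2)
    (hf2 : f2 = fun s => (s ^ 2 + 1) * Real.arccos (2 / (s ^ 2 + 1) - 1)) :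
    ∀ s : ℝ, 0 < s →
      Matrix.det !![f0 s, f1 s, f2 s;
                    deriv f0 s, deriv f1 s, deriv f2 s;
                    deriv (deriv f0) s, deriv (deriv f1) s, deriv (deriv f2) s] =
        2 * (β ^ 2 - 1) * Real.arccos (2 / (s ^ 2 + 1) - 1)
          - 4 * (β ^ 2 + 1) * s / (s ^ 2 + 1) := by
  intro s hs
  subst hf0 hf1 hf2
  set g : ℝ → ℝ := fun s => (s ^ 2 + 1) * (2 * Real.arctan s) with hg
  -- f2 agrees with g near s
  have heq : (fun s : ℝ => (s ^ 2 + 1) * Real.arccos (2 / (s ^ 2 + 1) - 1)) =ᶠ[nhds s] g := by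
    filter_upwards [IsOpen.mem_nhds isOpen_Ioi hs] with x hx
    rw [hg]
    simp only [arccos_eq_two_arctan (le_of_lt hx)]
  have hd1 : deriv (fun s : ℝ => (s ^ 2 + 1) * Real.arccos (2 / (s ^ 2 + 1) - 1)) s
      = deriv g s := heq.deriv_eq
  have hderiv_eq : deriv (fun s : ℝ => (s ^ 2 + 1) * Real.arccos (2 / (s ^ 2 + 1) - 1))
      =ᶠ[nhds s] deriv g := by
    have : ∀ᶠ x in nhds s, (fun s : ℝ => (s ^ 2 + 1) * Real.arccos (2 / (s ^ 2 + 1) - 1))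
        =ᶠ[nhds x] g := heq.eventually_nhds
    filter_upwards [this] with x hx using hx.deriv_eq
  have hd2 : deriv (deriv (fun s : ℝ => (s ^ 2 + 1) * Real.arccos (2 / (s ^ 2 + 1) - 1))) s
      = deriv (deriv g) s := hderiv_eq.deriv_eq
  -- derivatives of f0, f1
  have hdf0 : deriv (fun s : ℝ => s) = fun _ => (1:ℝ) := by
    funext x; simp
  have hdf1 : deriv (fun s : ℝ => 1 + β ^ 2 * s ^ 2) = fun s => 2 * β ^ 2 * s := by
    funext x
    have h : HasDerivAt (fun s : ℝ => 1 + β ^ 2 * s ^ 2) (2 * β ^ 2 * x) x := by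
      have : HasDerivAt (fun s : ℝ => 1 + β ^ 2 * s ^ 2) _ x :=
        ((hasDerivAt_pow 2 x).const_mul (β ^ 2)).const_add 1
      convert this using 1
      ring
    exact h.deriv
  have hdf1' : deriv (deriv (fun s : ℝ => 1 + β ^ 2 * s ^ 2)) s = 2 * β ^ 2 := by
    rw [hdf1]
    have h : HasDerivAt (fun s : ℝ => 2 * β ^ 2 * s) (2 * β ^ 2) s := by
      simpa using (hasDerivAt_id s).const_mul (2 * β ^ 2)
    exact h.deriv
  have hdf0' : deriv (deriv (fun s : ℝ => s)) s = 0 := by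
    rw [hdf0]; simp
  have e1 : deriv (fun s : ℝ => (s ^ 2 + 1) * Real.arccos (2 / (s ^ 2 + 1) - 1)) s
      = 4 * s * Real.arctan s + 2 := by rw [hd1, hg, deriv_g]
  have e2 : deriv (deriv (fun s : ℝ => (s ^ 2 + 1) * Real.arccos (2 / (s ^ 2 + 1) - 1))) s
      = 4 * Real.arctan s + 4 * s / (1 + s ^ 2) := by rw [hd2, hg, deriv_g2]
  simp only [Matrix.det_fin_three, Matrix.cons_val', Matrix.cons_val_zero, Matrix.cons_val_one,
    Matrix.head_cons, Matrix.empty_val', Matrix.cons_val_fin_one, Matrix.head_fin_const,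
    Matrix.cons_val_two, Matrix.tail_cons, Matrix.of_apply]
  rw [e1, e2, hdf1', hdf0', hdf0, hdf1, arccos_eq_two_arctan hs.le]
  have h1 : (0:ℝ) < 1 + s ^ 2 := by positivity
  have h2 : (0:ℝ) < s ^ 2 + 1 := by positivity
  field_simp
  ring
end

section
/- Let β > 0 and define f0(s) = s, f1(s) = 1 + β²·s², f2(s) = (s² + 1)·arccos(2/(s² + 1) − 1), f3(s) = (β²·s² + 1)·arccos(2/(β²·s² + 1) − 1). Then for every s > 0 the fourth-order Wronskian determinant W(f0, f1, f2, f3)(s) (the determinant of the 4×4 matrix whose rows are the functions and their first three derivatives at s) equals 16β³(β² − 1)·(2s(s² − 1) + (s² + 1)²·arccos(2/(s² + 1) − 1)) / ((s² + 1)²·(β²·s² + 1)²). -/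
open Real

section Aux

variable (c : ℝ)

noncomputable def Gm (c : ℝ) : ℝ → ℝ :=
  fun s => (c ^ 2 * s ^ 2 + 1) * Real.arccos (2 / (c ^ 2 * s ^ 2 + 1) - 1)

lemma den_pos {c s : ℝ} : (0:ℝ) < c ^ 2 * s ^ 2 + 1 := by positivity

lemma arccos_hd {c s : ℝ} (hc : 0 < c) (hs : 0 < s) :
    HasDerivAt (fun s => Real.arccos (2 / (c ^ 2 * s ^ 2 + 1) - 1))
      (2 * c / (c ^ 2 * s ^ 2 + 1)) s := by
  have hden : (c ^ 2 * s ^ 2 + 1) ≠ 0 := ne_of_gt den_pos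
  have h1 : HasDerivAt (fun s : ℝ => c ^ 2 * s ^ 2 + 1) (c ^ 2 * (2 * s)) s := by
    simpa using ((hasDerivAt_pow 2 s).const_mul (c ^ 2)).add_const 1
  have h2 : HasDerivAt (fun s : ℝ => 2 / (c ^ 2 * s ^ 2 + 1) - 1)
      ((0 * (c ^ 2 * s ^ 2 + 1) - 2 * (c ^ 2 * (2 * s))) / (c ^ 2 * s ^ 2 + 1) ^ 2) s :=
    ((hasDerivAt_const s 2).div h1 hden).sub_const 1
  set u : ℝ := 2 / (c ^ 2 * s ^ 2 + 1) - 1 with hu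
  have hcs : 0 < c ^ 2 * s ^ 2 := mul_pos (pow_pos hc 2) (pow_pos hs 2)
  have hlt : 2 / (c ^ 2 * s ^ 2 + 1) < 2 := by
    rw [div_lt_iff₀ den_pos]; nlinarith
  have hgt : 0 < 2 / (c ^ 2 * s ^ 2 + 1) := by positivity
  have hu1 : u ≠ 1 := by rw [hu]; intro h; linarith
  have hu2 : u ≠ -1 := by rw [hu]; intro h; linarith
  have harc := (Real.hasDerivAt_arccos hu2 hu1).comp s h2
  have hsq : 1 - u ^ 2 = (2 * c * s / (c ^ 2 * s ^ 2 + 1)) ^ 2 := by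
    rw [hu]; field_simp; ring
  have hsqrt : Real.sqrt (1 - u ^ 2) = 2 * c * s / (c ^ 2 * s ^ 2 + 1) := by
    rw [hsq, Real.sqrt_sq (by positivity)]
  refine harc.congr_deriv ?_
  rw [hsqrt]
  field_simp
  ring

lemma Gm_hd1 {c s : ℝ} (hc : 0 < c) (hs : 0 < s) :
    HasDerivAt (Gm c)
      (2 * c ^ 2 * s * Real.arccos (2 / (c ^ 2 * s ^ 2 + 1) - 1) + 2 * c) s := by
  have h1 : HasDerivAt (fun s : ℝ => c ^ 2 * s ^ 2 + 1) (c ^ 2 * (2 * s)) s := by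
    simpa using ((hasDerivAt_pow 2 s).const_mul (c ^ 2)).add_const 1
  have h2 := h1.mul (arccos_hd hc hs)
  refine h2.congr_deriv ?_
  have hden : (c ^ 2 * s ^ 2 + 1) ≠ 0 := ne_of_gt den_pos
  have key : (c ^ 2 * s ^ 2 + 1) * (2 * c / (c ^ 2 * s ^ 2 + 1)) = 2 * c := by
    field_simp
  rw [key]; ring

lemma Gm_d1 {c : ℝ} (hc : 0 < c) {s : ℝ} (hs : 0 < s) :
    deriv (Gm c) s
      = 2 * c ^ 2 * s * Real.arccos (2 / (c ^ 2 * s ^ 2 + 1) - 1) + 2 * c :=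
  (Gm_hd1 hc hs).deriv

lemma Gm_hd2 {c s : ℝ} (hc : 0 < c) (hs : 0 < s) :
    HasDerivAt (fun s => 2 * c ^ 2 * s * Real.arccos (2 / (c ^ 2 * s ^ 2 + 1) - 1) + 2 * c)
      (2 * c ^ 2 * Real.arccos (2 / (c ^ 2 * s ^ 2 + 1) - 1)
        + 4 * c ^ 3 * s / (c ^ 2 * s ^ 2 + 1)) s := by
  have h1 : HasDerivAt (fun s : ℝ => 2 * c ^ 2 * s) (2 * c ^ 2) s := by
    simpa using (hasDerivAt_id s).const_mul (2 * c ^ 2)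
  have h2 := (h1.mul (arccos_hd hc hs)).add_const (2 * c)
  refine h2.congr_deriv ?_
  ring

lemma Gm_d2 {c : ℝ} (hc : 0 < c) {s : ℝ} (hs : 0 < s) :
    deriv (deriv (Gm c)) s
      = 2 * c ^ 2 * Real.arccos (2 / (c ^ 2 * s ^ 2 + 1) - 1)
        + 4 * c ^ 3 * s / (c ^ 2 * s ^ 2 + 1) := by
  have hev : deriv (Gm c) =ᶠ[nhds s]
      (fun s => 2 * c ^ 2 * s * Real.arccos (2 / (c ^ 2 * s ^ 2 + 1) - 1) + 2 * c) := by
    filter_upwards [isOpen_Ioi.mem_nhds (Set.mem_Ioi.mpr hs)] with t ht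
    exact Gm_d1 hc ht
  rw [hev.deriv_eq]
  exact (Gm_hd2 hc hs).deriv

lemma Gm_hd3 {c s : ℝ} (hc : 0 < c) (hs : 0 < s) :
    HasDerivAt (fun s => 2 * c ^ 2 * Real.arccos (2 / (c ^ 2 * s ^ 2 + 1) - 1)
        + 4 * c ^ 3 * s / (c ^ 2 * s ^ 2 + 1))
      (8 * c ^ 3 / (c ^ 2 * s ^ 2 + 1) ^ 2) s := by
  have hden : (c ^ 2 * s ^ 2 + 1) ≠ 0 := ne_of_gt den_pos
  have h1 : HasDerivAt (fun s : ℝ => c ^ 2 * s ^ 2 + 1) (c ^ 2 * (2 * s)) s := by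
    simpa using ((hasDerivAt_pow 2 s).const_mul (c ^ 2)).add_const 1
  have h2 : HasDerivAt (fun s : ℝ => 4 * c ^ 3 * s) (4 * c ^ 3) s := by
    simpa using (hasDerivAt_id s).const_mul (4 * c ^ 3)
  have h3 := h2.div h1 hden
  have h4 := ((arccos_hd hc hs).const_mul (2 * c ^ 2)).add h3
  refine h4.congr_deriv ?_
  field_simp
  ring

lemma Gm_d3 {c : ℝ} (hc : 0 < c) {s : ℝ} (hs : 0 < s) :
    deriv (deriv (deriv (Gm c))) s = 8 * c ^ 3 / (c ^ 2 * s ^ 2 + 1) ^ 2 := by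
  have hev : deriv (deriv (Gm c)) =ᶠ[nhds s]
      (fun s => 2 * c ^ 2 * Real.arccos (2 / (c ^ 2 * s ^ 2 + 1) - 1)
        + 4 * c ^ 3 * s / (c ^ 2 * s ^ 2 + 1)) := by
    filter_upwards [isOpen_Ioi.mem_nhds (Set.mem_Ioi.mpr hs)] with t ht
    exact Gm_d2 hc ht
  rw [hev.deriv_eq]
  exact (Gm_hd3 hc hs).deriv

end Aux

lemma my_det_fin_four (M : Matrix (Fin 4) (Fin 4) ℝ) :
    M.det =
      M 0 0 * (M 1 1 * (M 2 2 * M 3 3 - M 2 3 * M 3 2)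
             - M 1 2 * (M 2 1 * M 3 3 - M 2 3 * M 3 1)
             + M 1 3 * (M 2 1 * M 3 2 - M 2 2 * M 3 1))
    - M 0 1 * (M 1 0 * (M 2 2 * M 3 3 - M 2 3 * M 3 2)
             - M 1 2 * (M 2 0 * M 3 3 - M 2 3 * M 3 0)
             + M 1 3 * (M 2 0 * M 3 2 - M 2 2 * M 3 0))
    + M 0 2 * (M 1 0 * (M 2 1 * M 3 3 - M 2 3 * M 3 1)
             - M 1 1 * (M 2 0 * M 3 3 - M 2 3 * M 3 0)
             + M 1 3 * (M 2 0 * M 3 1 - M 2 1 * M 3 0))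
    - M 0 3 * (M 1 0 * (M 2 1 * M 3 2 - M 2 2 * M 3 1)
             - M 1 1 * (M 2 0 * M 3 2 - M 2 2 * M 3 0)
             + M 1 2 * (M 2 0 * M 3 1 - M 2 1 * M 3 0)) := by
  simp only [Matrix.det_succ_row_zero, ← Nat.not_even_iff_odd, Matrix.submatrix_apply,
    Fin.succ_zero_eq_one, Matrix.submatrix_submatrix, Matrix.det_unique, Fin.default_eq_zero,
    Function.comp_apply, Fin.succ_one_eq_two, Fin.sum_univ_succ, Fin.val_zero, Fin.zero_succAbove,
    Finset.univ_unique, Fin.val_succ, Fin.val_eq_zero, Fin.succ_succAbove_zero,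
    Finset.sum_singleton, Fin.succ_succAbove_one, Even.add_self]
  norm_num [Fin.succAbove, Fin.lt_def, show (Fin.succ 2 : Fin 4) = 3 from rfl, show (Fin.castSucc 2 : Fin 4) = 2 from rfl, show (((3 : Fin 4) : ℕ)) = 3 from rfl]
  ring

set_option maxHeartbeats 2000000 in
theorem fourth_wronskian_formula
    (β : ℝ) (hβ : 0 < β)
    (f0 f1 f2 f3 : ℝ → ℝ)
    (hf0 : f0 = fun s => s)
    (hf1 : f1 = fun s => 1 + β ^ 2 * s ^ 2)
    (hf2 : f2 = fun s => (s ^ 2 + 1) * Real.arccos (2 / (s ^ 2 + 1) - 1))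
    (hf3 : f3 = fun s => (β ^ 2 * s ^ 2 + 1) * Real.arccos (2 / (β ^ 2 * s ^ 2 + 1) - 1)) :
    ∀ s : ℝ, 0 < s →
      Matrix.det !![f0 s, f1 s, f2 s, f3 s;
                    deriv f0 s, deriv f1 s, deriv f2 s, deriv f3 s;
                    deriv (deriv f0) s, deriv (deriv f1) s, deriv (deriv f2) s,
                      deriv (deriv f3) s;
                    deriv (deriv (deriv f0)) s, deriv (deriv (deriv f1)) s,
                      deriv (deriv (deriv f2)) s, deriv (deriv (deriv f3)) s] =
        16 * β ^ 3 * (β ^ 2 - 1) *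
            (2 * s * (s ^ 2 - 1) +
              (s ^ 2 + 1) ^ 2 * Real.arccos (2 / (s ^ 2 + 1) - 1)) /
          ((s ^ 2 + 1) ^ 2 * (β ^ 2 * s ^ 2 + 1) ^ 2) := by
  intro s hs
  have hs2 : (s ^ 2 + 1) ≠ 0 := by positivity
  have hb2 : (β ^ 2 * s ^ 2 + 1) ≠ 0 := by positivity
  -- f0 derivatives
  have d01 : deriv f0 = fun _ => (1:ℝ) := by
    rw [hf0]; funext t; simp
  have d02 : deriv (deriv f0) = fun _ => (0:ℝ) := by
    rw [d01]; funext t; simp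
  have d03 : deriv (deriv (deriv f0)) = fun _ => (0:ℝ) := by
    rw [d02]; funext t; simp
  -- f1 derivatives
  have d11 : deriv f1 = fun t => β ^ 2 * (2 * t) := by
    rw [hf1]; funext t
    have h : HasDerivAt (fun s : ℝ => 1 + β ^ 2 * s ^ 2) (β ^ 2 * (2 * t)) t := by
      simpa using (((hasDerivAt_pow 2 t).const_mul (β ^ 2)).const_add 1)
    exact h.deriv
  have d12 : deriv (deriv f1) = fun _ => β ^ 2 * 2 := by
    rw [d11]; funext t
    have hfun : (fun t : ℝ => β ^ 2 * (2 * t)) = fun y => β ^ 2 * 2 * y := by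
      funext y; ring
    rw [hfun]
    have h : HasDerivAt (fun y : ℝ => β ^ 2 * 2 * y) (β ^ 2 * 2) t := by
      simpa using (hasDerivAt_id t).const_mul (β ^ 2 * 2)
    exact h.deriv
  have d13 : deriv (deriv (deriv f1)) = fun _ => (0:ℝ) := by
    rw [d12]; funext t; simp
  -- f2, f3 via Gm
  have hf2G : f2 = Gm 1 := by rw [hf2]; funext t; simp [Gm]
  have hf3G : f3 = Gm β := by rw [hf3]; rfl
  have e12 : deriv f2 s = 2 * s * Real.arccos (2 / (s ^ 2 + 1) - 1) + 2 := by
    rw [hf2G, Gm_d1 one_pos hs]; norm_num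
  have e22 : deriv (deriv f2) s
      = 2 * Real.arccos (2 / (s ^ 2 + 1) - 1) + 4 * s / (s ^ 2 + 1) := by
    rw [hf2G, Gm_d2 one_pos hs]; norm_num
  have e32 : deriv (deriv (deriv f2)) s = 8 / (s ^ 2 + 1) ^ 2 := by
    rw [hf2G, Gm_d3 one_pos hs]; norm_num
  have e13 : deriv f3 s
      = 2 * β ^ 2 * s * Real.arccos (2 / (β ^ 2 * s ^ 2 + 1) - 1) + 2 * β := by
    rw [hf3G, Gm_d1 hβ hs]
  have e23 : deriv (deriv f3) s
      = 2 * β ^ 2 * Real.arccos (2 / (β ^ 2 * s ^ 2 + 1) - 1)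
        + 4 * β ^ 3 * s / (β ^ 2 * s ^ 2 + 1) := by
    rw [hf3G, Gm_d2 hβ hs]
  have e33 : deriv (deriv (deriv f3)) s = 8 * β ^ 3 / (β ^ 2 * s ^ 2 + 1) ^ 2 := by
    rw [hf3G, Gm_d3 hβ hs]
  have e00 : f0 s = s := by rw [hf0]
  have e01 : f1 s = 1 + β ^ 2 * s ^ 2 := by rw [hf1]
  have e02 : f2 s = (s ^ 2 + 1) * Real.arccos (2 / (s ^ 2 + 1) - 1) := by rw [hf2]
  have e03 : f3 s = (β ^ 2 * s ^ 2 + 1) * Real.arccos (2 / (β ^ 2 * s ^ 2 + 1) - 1) := by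
    rw [hf3]
  have d01s : deriv f0 s = 1 := by rw [d01]
  have d02s : deriv (deriv f0) s = 0 := by rw [d02]
  have d03s : deriv (deriv (deriv f0)) s = 0 := by rw [d03]
  have d11s : deriv f1 s = β ^ 2 * (2 * s) := by rw [d11]
  have d12s : deriv (deriv f1) s = β ^ 2 * 2 := by rw [d12]
  have d13s : deriv (deriv (deriv f1)) s = 0 := by rw [d13]
  rw [e00, e01, e02, e03, d01s, d02s, d03s, d11s, d12s, d13s, e12, e22, e32, e13, e23, e33]
  set A := Real.arccos (2 / (s ^ 2 + 1) - 1) with hA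
  set B := Real.arccos (2 / (β ^ 2 * s ^ 2 + 1) - 1) with hB
  rw [my_det_fin_four]
  simp only [Matrix.of_apply, Matrix.cons_val_zero, Matrix.cons_val_one, Matrix.cons_val_two, Matrix.cons_val_three, Matrix.head_cons, Matrix.tail_cons]
  norm_num [Matrix.vecHead, Matrix.vecTail]
  field_simp
  ring
end

section
/- Let β ∈ ℝ and define, for s > 0, W̃3(s) = 16β³(β² − 1)·(2s(s² − 1) + (s² + 1)²·arccos(2/(s² + 1) − 1)) / (s² + 1)². Then for every s > 0, W̃3 is differentiable at s and W̃3'(s) = 256·β³(β² − 1)·s² / (s² + 1)³. In particular, if β > 1 then W̃3 is strictly increasing on (0, ∞), and if 0 < β < 1 then W̃3 is strictly decreasing on (0, ∞). -/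
open Real Set

theorem wronskian_tilde_three_monotone
    (β : ℝ)
    (W3t : ℝ → ℝ)
    (hW3t : W3t = fun s =>
      16 * β ^ 3 * (β ^ 2 - 1) *
          (2 * s * (s ^ 2 - 1) +
            (s ^ 2 + 1) ^ 2 * Real.arccos (2 / (s ^ 2 + 1) - 1)) /
        (s ^ 2 + 1) ^ 2) :
    (∀ s : ℝ, 0 < s →
      HasDerivAt W3t (256 * β ^ 3 * (β ^ 2 - 1) * s ^ 2 / (s ^ 2 + 1) ^ 3) s) ∧
    (1 < β → StrictMonoOn W3t (Ioi 0)) ∧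
    (0 < β → β < 1 → StrictAntiOn W3t (Ioi 0)) := by
  have key : ∀ s : ℝ, 0 < s →
      HasDerivAt W3t (256 * β ^ 3 * (β ^ 2 - 1) * s ^ 2 / (s ^ 2 + 1) ^ 3) s := by
    intro s hs
    have hu : (0:ℝ) < s ^ 2 + 1 := by positivity
    have hu' : (s:ℝ) ^ 2 + 1 ≠ 0 := ne_of_gt hu
    -- derivative of the inner argument of arccos
    have hsq : HasDerivAt (fun x : ℝ => x ^ 2 + 1) (2 * s) s := by
      simpa using (hasDerivAt_pow 2 s).add_const 1
    have hv : HasDerivAt (fun x : ℝ => 2 / (x ^ 2 + 1) - 1)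
        (-4 * s / (s ^ 2 + 1) ^ 2) s := by
      have := ((hasDerivAt_const s (2:ℝ)).div hsq hu').sub_const 1
      refine this.congr_deriv ?_
      field_simp
      ring
    -- the argument is strictly between -1 and 1
    have hne1 : 2 / (s ^ 2 + 1) - 1 ≠ -1 := by
      intro h
      have : (2:ℝ) / (s ^ 2 + 1) = 0 := by linarith
      have := div_eq_zero_iff.mp this
      rcases this with h | h
      · norm_num at h
      · exact hu' h
    have hne2 : 2 / (s ^ 2 + 1) - 1 ≠ 1 := by
      intro h
      have h2 : (2:ℝ) / (s ^ 2 + 1) = 2 := by linarith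
      rw [div_eq_iff hu'] at h2
      nlinarith
    -- sqrt simplification
    have hsqrt : Real.sqrt (1 - (2 / (s ^ 2 + 1) - 1) ^ 2) = 2 * s / (s ^ 2 + 1) := by
      rw [show 1 - (2 / (s ^ 2 + 1) - 1) ^ 2 = (2 * s / (s ^ 2 + 1)) ^ 2 by
        field_simp; ring]
      exact Real.sqrt_sq (by positivity)
    -- derivative of the arccos part
    have har : HasDerivAt (fun x : ℝ => Real.arccos (2 / (x ^ 2 + 1) - 1))
        (2 / (s ^ 2 + 1)) s := by
      have := (Real.hasDerivAt_arccos hne1 hne2).comp s hv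
      refine this.congr_deriv ?_
      rw [hsqrt]
      field_simp
      ring
    -- derivative of the polynomial part
    have hp : HasDerivAt (fun x : ℝ => 2 * x * (x ^ 2 - 1))
        (2 * (s ^ 2 - 1) + 2 * s * (2 * s)) s := by
      have h1 : HasDerivAt (fun x : ℝ => 2 * x) 2 s := by
        simpa using (hasDerivAt_id s).const_mul 2
      exact (h1.mul ((hasDerivAt_pow 2 s).sub_const 1)).congr_deriv (by norm_num)
    have hq : HasDerivAt (fun x : ℝ => (x ^ 2 + 1) ^ 2)
        (2 * (s ^ 2 + 1) * (2 * s)) s := by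
      have := hsq.pow 2
      exact this.congr_deriv (by norm_num)
    have hnum : HasDerivAt (fun x : ℝ =>
        16 * β ^ 3 * (β ^ 2 - 1) *
          (2 * x * (x ^ 2 - 1) +
            (x ^ 2 + 1) ^ 2 * Real.arccos (2 / (x ^ 2 + 1) - 1)))
        (16 * β ^ 3 * (β ^ 2 - 1) *
          ((2 * (s ^ 2 - 1) + 2 * s * (2 * s)) +
            (2 * (s ^ 2 + 1) * (2 * s) * Real.arccos (2 / (s ^ 2 + 1) - 1) +
              (s ^ 2 + 1) ^ 2 * (2 / (s ^ 2 + 1))))) s := by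
      exact (hp.add (hq.mul har)).const_mul _
    have hQ : ((s:ℝ) ^ 2 + 1) ^ 2 ≠ 0 := by positivity
    have hdiv := hnum.div hq hQ
    rw [hW3t]
    refine hdiv.congr_deriv ?_
    have h2s : (2:ℝ) * s ≠ 0 := by positivity
    field_simp
    ring
  refine ⟨key, ?_, ?_⟩
  · intro hβ
    have hcont : ContinuousOn W3t (Ioi 0) := fun x hx =>
      (key x hx).differentiableAt.continuousAt.continuousWithinAt
    apply strictMonoOn_of_deriv_pos (convex_Ioi 0) hcont
    intro x hx
    rw [interior_Ioi] at hx
    rw [(key x hx).deriv]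
    have hb0 : (0:ℝ) < β := lt_trans one_pos hβ
    have hb3 : (0:ℝ) < β ^ 3 := by positivity
    have hb2 : (0:ℝ) < β ^ 2 - 1 := by nlinarith
    have hnum : (0:ℝ) < 256 * β ^ 3 * (β ^ 2 - 1) * x ^ 2 :=
      mul_pos (mul_pos (mul_pos (by norm_num) hb3) hb2) (pow_pos hx 2)
    exact div_pos hnum (by positivity)
  · intro hβ0 hβ1
    have hcont : ContinuousOn W3t (Ioi 0) := fun x hx =>
      (key x hx).differentiableAt.continuousAt.continuousWithinAt
    apply strictAntiOn_of_deriv_neg (convex_Ioi 0) hcont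
    intro x hx
    rw [interior_Ioi] at hx
    rw [(key x hx).deriv]
    have hb3 : (0:ℝ) < β ^ 3 := by positivity
    have hb2 : β ^ 2 - 1 < 0 := by nlinarith
    have hnum : 256 * β ^ 3 * (β ^ 2 - 1) * x ^ 2 < 0 := by
      have h1 : (0:ℝ) < 256 * β ^ 3 := by positivity
      have := mul_pos h1 (pow_pos hx 2)
      nlinarith [pow_pos (show (0:ℝ) < x from hx) 2]
    exact div_neg_of_neg_of_pos hnum (by positivity)
end

section
/- For every real number s > 0 one has 2s(s² − 1) + (s² + 1)²·arccos(2/(s² + 1) − 1) > 0. -/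
open Real

theorem wronskian_positivity (s : ℝ) (hs : 0 < s) :
    0 < 2 * s * (s ^ 2 - 1) + (s ^ 2 + 1) ^ 2 * Real.arccos (2 / (s ^ 2 + 1) - 1) := by
  have hs1 : (0:ℝ) < s ^ 2 + 1 := by positivity
  have ht : 0 < Real.arctan s := by rw [← Real.arctan_zero]; exact Real.arctan_strictMono hs
  have hcos : Real.cos (2 * Real.arctan s) = 2 / (s ^ 2 + 1) - 1 := by
    rw [Real.cos_two_mul, Real.cos_arctan]
    rw [div_pow, one_pow, Real.sq_sqrt (by positivity : (0:ℝ) ≤ 1 + s ^ 2)]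
    ring_nf
  have harc : Real.arccos (2 / (s ^ 2 + 1) - 1) = 2 * Real.arctan s := by
    rw [← hcos, Real.arccos_cos (by linarith)
      (by have := Real.arctan_lt_pi_div_two s; linarith)]
  rw [harc]
  have hsin : Real.sin (Real.arctan s) < Real.arctan s := Real.sin_lt ht
  rw [Real.sin_arctan] at hsin
  have hsqrt : Real.sqrt (1 + s ^ 2) ≤ 1 + s ^ 2 := by
    nlinarith [Real.sq_sqrt (by positivity : (0:ℝ) ≤ 1 + s ^ 2),
      Real.sqrt_nonneg (1 + s ^ 2)]
  have hsqrtpos : 0 < Real.sqrt (1 + s ^ 2) := Real.sqrt_pos.mpr (by positivity)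
  have hlb : s / (1 + s ^ 2) < Real.arctan s := by
    calc s / (1 + s ^ 2) ≤ s / Real.sqrt (1 + s ^ 2) := by
          apply div_le_div_of_nonneg_left hs.le hsqrtpos hsqrt
      _ < Real.arctan s := hsin
  have : s / (1 + s ^ 2) * (1 + s ^ 2) = s := by field_simp
  nlinarith [mul_lt_mul_of_pos_right hlb (by positivity : (0:ℝ) < (s ^ 2 + 1) ^ 2)]
end

section
/- Let b < 0, d > 0, e > 0, ξ > 0 and v1⁻, v1⁺, b11⁻, b22⁻, b11⁺, b22⁺ be real numbers, and let M1 be the first-order Melnikov function defined in the context. Then lim_{y0 → 0⁺} y0·M1(y0) = −π·e²·(b11⁻ + b22⁻). In particular, if b11⁻ + b22⁻ ≠ 0, then for all sufficiently small y0 > 0 the sign of M1(y0) equals −sign(b11⁻ + b22⁻). -/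
open Real Filter Set

private lemma sign_mul_pos' {c : ℝ} (hc : 0 < c) (x : ℝ) :
    Real.sign (c * x) = Real.sign x := by
  rcases lt_trichotomy x 0 with h | h | h
  · rw [Real.sign_of_neg h, Real.sign_of_neg (mul_neg_of_pos_of_neg hc h)]
  · simp [h]
  · rw [Real.sign_of_pos h, Real.sign_of_pos (mul_pos hc h)]

theorem melnikov_limit_at_zero
    (b d e ξ v1m v1p b11m b22m b11p b22p : ℝ)
    (hb : b < 0) (hd : 0 < d) (he : 0 < e) (hξ : 0 < ξ)
    (M1 : ℝ → ℝ)
    (hM1 : M1 = fun y0 =>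
      (1 / (2 * y0)) *
        (4 * v1m * y0 -
          2 * (b11m + b22m) * (π * (e ^ 2 + y0 ^ 2) + e * y0) +
          (b11m + b22m) * (e ^ 2 + y0 ^ 2) *
            Real.arccos (2 * e ^ 2 / (e ^ 2 + y0 ^ 2) - 1) -
          (1 / (b * ξ ^ 3)) *
            (-2 * b * d * y0 * ξ * (b11p + b22p) - 4 * v1p * y0 * ξ ^ 3 +
              b * (b11p + b22p) * (d ^ 2 + y0 ^ 2 * ξ ^ 2) *
                Real.arccos (2 * d ^ 2 / (d ^ 2 + y0 ^ 2 * ξ ^ 2) - 1)))) :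
    Tendsto (fun y0 => y0 * M1 y0) (nhdsWithin 0 (Ioi 0))
      (nhds (-(π * e ^ 2 * (b11m + b22m)))) ∧
    (b11m + b22m ≠ 0 →
      ∀ᶠ y0 in nhdsWithin 0 (Ioi 0),
        Real.sign (M1 y0) = -Real.sign (b11m + b22m)) := by
  subst hM1
  set S := b11m + b22m with hS
  set T := b11p + b22p with hT
  -- the "inner" function
  let F : ℝ → ℝ := fun y0 =>
      4 * v1m * y0 - 2 * S * (π * (e ^ 2 + y0 ^ 2) + e * y0) +
        S * (e ^ 2 + y0 ^ 2) * Real.arccos (2 * e ^ 2 / (e ^ 2 + y0 ^ 2) - 1) -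
        (1 / (b * ξ ^ 3)) *
          (-2 * b * d * y0 * ξ * T - 4 * v1p * y0 * ξ ^ 3 +
            b * T * (d ^ 2 + y0 ^ 2 * ξ ^ 2) *
              Real.arccos (2 * d ^ 2 / (d ^ 2 + y0 ^ 2 * ξ ^ 2) - 1))
  have hc1 : Continuous fun y : ℝ => Real.arccos (2 * e ^ 2 / (e ^ 2 + y ^ 2) - 1) :=
    Real.continuous_arccos.comp
      ((continuous_const.div (by continuity) (fun y => by positivity)).sub continuous_const)
  have hc2 : Continuous fun y : ℝ => Real.arccos (2 * d ^ 2 / (d ^ 2 + y ^ 2 * ξ ^ 2) - 1) :=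
    Real.continuous_arccos.comp
      ((continuous_const.div (by continuity) (fun y => by positivity)).sub continuous_const)
  have hFc : Continuous F := by
    refine Continuous.sub (Continuous.add (Continuous.sub ?_ ?_) ?_) ?_
    · continuity
    · continuity
    · exact (continuous_const.mul (by continuity)).mul hc1
    · refine continuous_const.mul (Continuous.add (by continuity) ?_)
      exact (continuous_const.mul (by continuity)).mul hc2
  have harg1 : 2 * e ^ 2 / (e ^ 2 + (0:ℝ) ^ 2) - 1 = 1 := by
    have : e ^ 2 ≠ 0 := by positivity
    field_simp
    ring
  have harg2 : 2 * d ^ 2 / (d ^ 2 + (0:ℝ) ^ 2 * ξ ^ 2) - 1 = 1 := by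
    have : d ^ 2 ≠ 0 := by positivity
    field_simp
    ring
  have hF0 : F 0 = -(2 * π * e ^ 2 * S) := by
    show (4 * v1m * 0 - 2 * S * (π * (e ^ 2 + 0 ^ 2) + e * 0) +
        S * (e ^ 2 + 0 ^ 2) * Real.arccos (2 * e ^ 2 / (e ^ 2 + 0 ^ 2) - 1) -
        (1 / (b * ξ ^ 3)) *
          (-2 * b * d * 0 * ξ * T - 4 * v1p * 0 * ξ ^ 3 +
            b * T * (d ^ 2 + 0 ^ 2 * ξ ^ 2) *
              Real.arccos (2 * d ^ 2 / (d ^ 2 + 0 ^ 2 * ξ ^ 2) - 1))) = -(2 * π * e ^ 2 * S)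
    rw [harg1, harg2, Real.arccos_one]
    ring
  have hMeq : ∀ y : ℝ, y ∈ Ioi (0:ℝ) →
      ((fun y0 : ℝ =>
      (1 / (2 * y0)) *
        (4 * v1m * y0 -
          2 * S * (π * (e ^ 2 + y0 ^ 2) + e * y0) +
          S * (e ^ 2 + y0 ^ 2) *
            Real.arccos (2 * e ^ 2 / (e ^ 2 + y0 ^ 2) - 1) -
          (1 / (b * ξ ^ 3)) *
            (-2 * b * d * y0 * ξ * T - 4 * v1p * y0 * ξ ^ 3 +
              b * T * (d ^ 2 + y0 ^ 2 * ξ ^ 2) *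
                Real.arccos (2 * d ^ 2 / (d ^ 2 + y0 ^ 2 * ξ ^ 2) - 1)))) y)
        = (1 / (2 * y)) * F y := fun y _ => rfl
  constructor
  · -- limit
    have h1 : Tendsto F (nhdsWithin 0 (Ioi 0)) (nhds (-(2 * π * e ^ 2 * S))) := by
      have := (hFc.tendsto 0).mono_left (nhdsWithin_le_nhds (s := Ioi (0:ℝ)))
      rwa [hF0] at this
    have h2 : Tendsto (fun y => F y / 2) (nhdsWithin 0 (Ioi 0))
        (nhds (-(π * e ^ 2 * S))) := by
      have := h1.div_const 2
      have heq : -(2 * π * e ^ 2 * S) / 2 = -(π * e ^ 2 * S) := by ring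
      rwa [heq] at this
    refine h2.congr' ?_
    filter_upwards [self_mem_nhdsWithin] with y hy
    have hy0 : (y:ℝ) ≠ 0 := ne_of_gt hy
    show F y / 2 = y * (1 / (2 * y) * F y)
    field_simp
  · intro hSne
    have hF0ne : F 0 ≠ 0 := by
      rw [hF0]
      simp only [neg_ne_zero]
      exact mul_ne_zero (by positivity) hSne
    rcases hF0ne.lt_or_gt with h | h
    · -- F 0 < 0, so S > 0
      have hSpos : 0 < S := by
        rw [hF0] at h
        nlinarith [mul_pos Real.pi_pos (pow_pos he 2)]
      have hev : ∀ᶠ y in nhds (0:ℝ), F y < 0 :=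
        (hFc.tendsto 0).eventually (eventually_lt_nhds h)
      filter_upwards [hev.filter_mono nhdsWithin_le_nhds, self_mem_nhdsWithin] with y hyF hy0
      show Real.sign (1 / (2 * y) * F y) = -Real.sign S
      have hy' : (0:ℝ) < y := hy0
      have hcpos : (0:ℝ) < 1 / (2 * y) := by positivity
      rw [sign_mul_pos' hcpos, Real.sign_of_neg hyF, Real.sign_of_pos hSpos]
    · have hSneg : S < 0 := by
        rw [hF0] at h
        nlinarith [mul_pos Real.pi_pos (pow_pos he 2)]
      have hev : ∀ᶠ y in nhds (0:ℝ), 0 < F y :=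
        (hFc.tendsto 0).eventually (eventually_gt_nhds h)
      filter_upwards [hev.filter_mono nhdsWithin_le_nhds, self_mem_nhdsWithin] with y hyF hy0
      show Real.sign (1 / (2 * y) * F y) = -Real.sign S
      have hy' : (0:ℝ) < y := hy0
      have hcpos : (0:ℝ) < 1 / (2 * y) := by positivity
      rw [sign_mul_pos' hcpos, Real.sign_of_pos hyF, Real.sign_of_neg hSneg]
      norm_num
end

section
/- Let b < 0, d > 0, e > 0, ξ > 0 and v1⁻, v1⁺, b11⁻, b22⁻, b11⁺, b22⁺ be real numbers, and let M1 be the first-order Melnikov function defined in the context. Then lim_{y0 → +∞} M1(y0)/y0 = −π·(ξ·(b11⁻ + b22⁻) + b11⁺ + b22⁺)/(2ξ). In particular, if ξ(b11⁻+b22⁻) + b11⁺ + b22⁺ ≠ 0, then for all sufficiently large y0 the sign of M1(y0) equals −sign(ξ(b11⁻+b22⁻) + b11⁺ + b22⁺). -/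
open Real Filter Set

theorem melnikov_limit_at_infinity
    (b d e ξ v1m v1p b11m b22m b11p b22p : ℝ)
    (hb : b < 0) (hd : 0 < d) (he : 0 < e) (hξ : 0 < ξ)
    (M1 : ℝ → ℝ)
    (hM1 : M1 = fun y0 =>
      (1 / (2 * y0)) *
        (4 * v1m * y0 -
          2 * (b11m + b22m) * (π * (e ^ 2 + y0 ^ 2) + e * y0) +
          (b11m + b22m) * (e ^ 2 + y0 ^ 2) *
            Real.arccos (2 * e ^ 2 / (e ^ 2 + y0 ^ 2) - 1) -
          (1 / (b * ξ ^ 3)) *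
            (-2 * b * d * y0 * ξ * (b11p + b22p) - 4 * v1p * y0 * ξ ^ 3 +
              b * (b11p + b22p) * (d ^ 2 + y0 ^ 2 * ξ ^ 2) *
                Real.arccos (2 * d ^ 2 / (d ^ 2 + y0 ^ 2 * ξ ^ 2) - 1)))) :
    Tendsto (fun y0 => M1 y0 / y0) atTop
      (nhds (-(π * (ξ * (b11m + b22m) + b11p + b22p) / (2 * ξ)))) ∧
    (ξ * (b11m + b22m) + b11p + b22p ≠ 0 →
      ∀ᶠ y0 in atTop,
        Real.sign (M1 y0) = -Real.sign (ξ * (b11m + b22m) + b11p + b22p)) := by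
  set A := b11m + b22m with hA
  set B := b11p + b22p with hB
  set g : ℝ → ℝ := fun y0 =>
    (2*v1m) * (1/y0)
    - (A*π) * (e^2*(1/y0)^2+1)
    - (A*e) * (1/y0)
    + (A/2) * ((e^2*(1/y0)^2+1) * Real.arccos (2*e^2/(e^2+y0^2) - 1))
    - (1/(b*ξ^3)) * ( (-(b*d*ξ*B)) * (1/y0) - (2*v1p*ξ^3) * (1/y0)
        + (b*B/2) * ((d^2*(1/y0)^2+ξ^2) * Real.arccos (2*d^2/(d^2+y0^2*ξ^2) - 1)) ) with hg
  have hinv : Tendsto (fun y0:ℝ => 1/y0) atTop (nhds 0) := by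
    simpa [one_div] using (tendsto_inv_atTop_zero : Tendsto (fun x:ℝ => x⁻¹) atTop (nhds 0))
  have hsq1 : Tendsto (fun y0:ℝ => e^2*(1/y0)^2+1) atTop (nhds 1) := by
    have := ((hinv.pow 2).const_mul (e^2)).add_const 1
    simpa using this
  have hsq2 : Tendsto (fun y0:ℝ => d^2*(1/y0)^2+ξ^2) atTop (nhds (ξ^2)) := by
    have := ((hinv.pow 2).const_mul (d^2)).add_const (ξ^2)
    simpa using this
  have hden1 : Tendsto (fun y0:ℝ => e^2 + y0^2) atTop atTop :=
    tendsto_atTop_add_const_left _ _ (tendsto_pow_atTop (two_ne_zero))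
  have hden2 : Tendsto (fun y0:ℝ => d^2 + y0^2*ξ^2) atTop atTop :=
    tendsto_atTop_add_const_left _ _
      ((tendsto_pow_atTop (two_ne_zero)).atTop_mul_const (by positivity : (0:ℝ) < ξ^2))
  have harc1 : Tendsto (fun y0:ℝ => Real.arccos (2*e^2/(e^2+y0^2) - 1)) atTop (nhds π) := by
    have harg : Tendsto (fun y0:ℝ => 2*e^2/(e^2+y0^2) - 1) atTop (nhds (-1)) := by
      have := (Tendsto.div_atTop (tendsto_const_nhds (x := 2*e^2)) hden1).sub_const 1
      simpa using this
    have := (Real.continuous_arccos.tendsto (-1)).comp harg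
    simpa [Real.arccos_neg_one, Function.comp_def] using this
  have harc2 : Tendsto (fun y0:ℝ => Real.arccos (2*d^2/(d^2+y0^2*ξ^2) - 1)) atTop (nhds π) := by
    have harg : Tendsto (fun y0:ℝ => 2*d^2/(d^2+y0^2*ξ^2) - 1) atTop (nhds (-1)) := by
      have := (Tendsto.div_atTop (tendsto_const_nhds (x := 2*d^2)) hden2).sub_const 1
      simpa using this
    have := (Real.continuous_arccos.tendsto (-1)).comp harg
    simpa [Real.arccos_neg_one, Function.comp_def] using this
  have hgl : Tendsto g atTop (nhds (-(π * (ξ * A + B) / (2 * ξ)))) := by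
    have hraw : Tendsto g atTop (nhds (
      (2*v1m) * 0 - (A*π) * 1 - (A*e) * 0 + (A/2) * (1 * π)
      - (1/(b*ξ^3)) * ( (-(b*d*ξ*B)) * 0 - (2*v1p*ξ^3) * 0 + (b*B/2) * (ξ^2 * π) ) )) := by
      exact ((((hinv.const_mul _).sub (hsq1.const_mul _)).sub (hinv.const_mul _)).add
        ((hsq1.mul harc1).const_mul _)).sub
        ((((hinv.const_mul _).sub (hinv.const_mul _)).add
          ((hsq2.mul harc2).const_mul _)).const_mul _)
    convert hraw using 2
    field_simp [hb.ne, hξ.ne']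
    ring
  have heq : g =ᶠ[atTop] (fun y0 => M1 y0 / y0) := by
    filter_upwards [eventually_gt_atTop (0:ℝ)] with y0 hy0
    have hy : y0 ≠ 0 := ne_of_gt hy0
    simp only [hM1, hg]
    generalize Real.arccos (2*e^2/(e^2+y0^2) - 1) = c1
    generalize Real.arccos (2*d^2/(d^2+y0^2*ξ^2) - 1) = c2
    field_simp [hb.ne, hξ.ne']
    ring
  have hlim : Tendsto (fun y0 => M1 y0 / y0) atTop (nhds (-(π * (ξ * A + B) / (2 * ξ)))) :=
    hgl.congr' heq
  have hval : -(π * (ξ * A + b11p + b22p) / (2 * ξ)) = -(π * (ξ * A + B) / (2 * ξ)) := by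
    rw [hB]; ring
  refine ⟨hval ▸ hlim, ?_⟩
  intro hS
  have hSB : ξ * A + B ≠ 0 := by rw [hB]; intro h; exact hS (by linarith)
  rcases lt_or_gt_of_ne hSB with hS' | hS'
  · -- S < 0, limit L = -(π S/(2ξ)) > 0
    have hL : 0 < -(π * (ξ * A + B) / (2 * ξ)) := by
      have : π * (ξ * A + B) / (2 * ξ) < 0 := by
        apply div_neg_of_neg_of_pos
        · exact mul_neg_of_pos_of_neg Real.pi_pos hS'
        · linarith
      linarith
    filter_upwards [hlim.eventually_const_lt (show (0:ℝ) < _ from hL),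
      eventually_gt_atTop (0:ℝ)] with y0 h1 h2
    have hM : 0 < M1 y0 := by
      have := (div_pos_iff).mp h1
      rcases this with ⟨h, _⟩ | ⟨_, h⟩
      · exact h
      · linarith
    rw [Real.sign_of_pos hM, Real.sign_of_neg (show ξ * (b11m + b22m) + b11p + b22p < 0 from by rw [hA, hB] at hS'; linarith)]
    norm_num
  · -- S > 0, limit < 0
    have hL : -(π * (ξ * A + B) / (2 * ξ)) < 0 := by
      have : 0 < π * (ξ * A + B) / (2 * ξ) := by positivity
      linarith
    filter_upwards [hlim.eventually_lt_const hL, eventually_gt_atTop (0:ℝ)] with y0 h1 h2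
    have hM : M1 y0 < 0 := by
      have := (div_neg_iff).mp h1
      rcases this with ⟨h, h'⟩ | ⟨h, _⟩
      · linarith
      · exact h
    rw [Real.sign_of_neg hM, Real.sign_of_pos (show 0 < ξ * (b11m + b22m) + b11p + b22p from by rw [hA, hB] at hS'; linarith)]
end

section
/- For every s > 0 with s ≠ 1, the function W̃1(s) = (−2s + (s² − 1)·arccos(1 − 2/(s² + 1)))/(s² − 1) is differentiable at s and W̃1'(s) = 8s²/((s² − 1)²·(s² + 1)). In particular W̃1 is strictly increasing on (0, 1) and on (1, ∞). -/
open Real Set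

theorem wronskian_tilde_one_monotone
    (W1t : ℝ → ℝ)
    (hW1t : W1t = fun s =>
      (-2 * s + (s ^ 2 - 1) * Real.arccos (1 - 2 / (s ^ 2 + 1))) / (s ^ 2 - 1)) :
    (∀ s : ℝ, 0 < s → s ≠ 1 →
      HasDerivAt W1t (8 * s ^ 2 / ((s ^ 2 - 1) ^ 2 * (s ^ 2 + 1))) s) ∧
    StrictMonoOn W1t (Ioo 0 1) ∧ StrictMonoOn W1t (Ioi 1) := by
  have key : ∀ s : ℝ, 0 < s → s ≠ 1 →
      HasDerivAt W1t (8 * s ^ 2 / ((s ^ 2 - 1) ^ 2 * (s ^ 2 + 1))) s := by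
    intro s hs hs1
    have hs1' : s ^ 2 - 1 ≠ 0 := by
      intro h
      have h2 : s ^ 2 = 1 := by linarith
      have : s = 1 := by nlinarith
      exact hs1 this
    have hden : (0 : ℝ) < s ^ 2 + 1 := by positivity
    have hden' : s ^ 2 + 1 ≠ 0 := ne_of_gt hden
    -- derivative of the inner function u(s) = 1 - 2/(s^2+1)
    have hpoly : HasDerivAt (fun s : ℝ => s ^ 2 + 1) (2 * s) s := by
      simpa using (hasDerivAt_pow 2 s).add_const 1
    have hu : HasDerivAt (fun s : ℝ => 1 - 2 / (s ^ 2 + 1)) (4 * s / (s ^ 2 + 1) ^ 2) s := by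
      have h2 : HasDerivAt (fun s : ℝ => 2 / (s ^ 2 + 1))
          ((0 * (s ^ 2 + 1) - 2 * (2 * s)) / (s ^ 2 + 1) ^ 2) s :=
        (hasDerivAt_const s 2).div hpoly hden'
      have := h2.const_sub 1
      refine this.congr_deriv ?_
      field_simp
      ring
    -- value bounds for arccos argument
    have hune : (1 - 2 / (s ^ 2 + 1)) ≠ -1 := by
      intro h
      have h2 : 2 / (s ^ 2 + 1) = 2 := by linarith
      rw [div_eq_iff hden'] at h2
      nlinarith
    have hune1 : (1 - 2 / (s ^ 2 + 1)) ≠ 1 := by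
      intro h
      have : 2 / (s ^ 2 + 1) = 0 := by linarith
      have := div_eq_zero_iff.mp this
      rcases this with h | h
      · norm_num at h
      · exact hden' h
    have hsq : Real.sqrt (1 - (1 - 2 / (s ^ 2 + 1)) ^ 2) = 2 * s / (s ^ 2 + 1) := by
      have h1 : 1 - (1 - 2 / (s ^ 2 + 1)) ^ 2 = (2 * s / (s ^ 2 + 1)) ^ 2 := by
        field_simp
        ring
      rw [h1, Real.sqrt_sq (by positivity)]
    -- derivative of arccos ∘ u
    have hA : HasDerivAt (fun s : ℝ => Real.arccos (1 - 2 / (s ^ 2 + 1)))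
        (-(2 / (s ^ 2 + 1))) s := by
      have := (Real.hasDerivAt_arccos hune hune1).comp s hu
      refine this.congr_deriv ?_
      rw [hsq]
      field_simp
      ring
    -- numerator g
    have hg : HasDerivAt (fun s : ℝ =>
        -2 * s + (s ^ 2 - 1) * Real.arccos (1 - 2 / (s ^ 2 + 1)))
        (-2 + ((2 * s) * Real.arccos (1 - 2 / (s ^ 2 + 1)) +
          (s ^ 2 - 1) * (-(2 / (s ^ 2 + 1))))) s := by
      have hlin : HasDerivAt (fun s : ℝ => -2 * s) (-2 : ℝ) s := by
        simpa using (hasDerivAt_id s).const_mul (-2 : ℝ)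
      have hpoly2 : HasDerivAt (fun s : ℝ => s ^ 2 - 1) (2 * s) s := by
        simpa using (hasDerivAt_pow 2 s).sub_const 1
      exact hlin.add (hpoly2.mul hA)
    have hfull := hg.div (by simpa using (hasDerivAt_pow 2 s).sub_const 1 : HasDerivAt (fun s : ℝ => s ^ 2 - 1) (2 * s) s) hs1'
    rw [hW1t]
    refine hfull.congr_deriv ?_
    field_simp
    ring
  refine ⟨key, ?_, ?_⟩
  · apply strictMonoOn_of_deriv_pos (convex_Ioo 0 1)
    · intro x hx
      exact ((key x hx.1 (ne_of_lt hx.2)).differentiableAt).continuousAt.continuousWithinAt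
    · intro x hx
      rw [interior_Ioo] at hx
      rw [(key x hx.1 (ne_of_lt hx.2)).deriv]
      apply div_pos (by nlinarith [hx.1])
      exact mul_pos (pow_two_pos_of_ne_zero (by nlinarith [hx.1, hx.2])) (by positivity)
  · apply strictMonoOn_of_deriv_pos (convex_Ioi 1)
    · intro x hx
      exact ((key x (lt_trans one_pos hx) (ne_of_gt hx)).differentiableAt).continuousAt.continuousWithinAt
    · intro x hx
      rw [interior_Ioi] at hx
      rw [(key x (lt_trans one_pos hx) (ne_of_gt hx)).deriv]
      have hx1 : (1:ℝ) < x := hx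
      apply div_pos (by nlinarith)
      exact mul_pos (pow_two_pos_of_ne_zero (by nlinarith)) (by positivity)
end
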